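/- Let φ be the traveling-wave profile. Then φ is twice continuously differentiable on (0,1/2) and satisfies φ(η)·φ''(η) = (1/2)·(φ'(η))² + η − 1/2 for all η ∈ (0,1/2). -/

import Mathlib

open Set Filter Real


/-- If `f' ≥ k/t` near `0` with `k > 0`, then `f` cannot be bounded below near `0⁺`. -/
lemma aux_log_blowup {f g : ℝ → ℝ} {a k B : ℝ} (ha : 0 < a) (hk : 0 < k)
    (hc : ContinuousOn f (Set.Ioc 0 a))
    (hder : ∀ t ∈ Set.Ioo (0:ℝ) a, HasDerivAt f (g t) t)
    (hge : ∀ t ∈ Set.Ioo (0:ℝ) a, k / t ≤ g t)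
    (hbb : ∀ᶠ t in nhdsWithin 0 (Set.Ioi 0), B ≤ f t) : False := by
  have key : ∀ b ∈ Set.Ioo (0:ℝ) a, f b - k * Real.log b ≤ f a - k * Real.log a := by
    intro b hb
    have hsub : Set.Icc b a ⊆ Set.Ioc 0 a := fun t ht => ⟨hb.1.trans_le ht.1, ht.2⟩
    have hmono : MonotoneOn (fun t => f t - k * Real.log t) (Set.Icc b a) := by
      apply monotoneOn_of_deriv_nonneg (convex_Icc b a)
      · exact (hc.mono hsub).sub (continuousOn_const.mul
          (Real.continuousOn_log.mono fun t ht => ne_of_gt (hsub ht).1))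
      · rw [interior_Icc]
        intro t ht
        have ht' : t ∈ Set.Ioo (0:ℝ) a := ⟨hb.1.trans ht.1, ht.2⟩
        exact (((hder t ht').sub
          ((Real.hasDerivAt_log ht'.1.ne').const_mul k)).differentiableAt).differentiableWithinAt
      · rw [interior_Icc]
        intro t ht
        have ht' : t ∈ Set.Ioo (0:ℝ) a := ⟨hb.1.trans ht.1, ht.2⟩
        show 0 ≤ deriv (f - fun y => k * Real.log y) t
        rw [(((hder t ht').sub ((Real.hasDerivAt_log ht'.1.ne').const_mul k)).deriv)]
        have h1 := hge t ht'
        rw [div_eq_mul_inv] at h1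
        linarith
    exact hmono ⟨le_refl b, hb.2.le⟩ ⟨hb.2.le, le_refl a⟩ hb.2.le
  have hlog : Filter.Tendsto (fun b => k * Real.log b) (nhdsWithin 0 (Set.Ioi 0)) Filter.atBot :=
    (tendsto_const_mul_atBot_of_pos hk).2 Real.tendsto_log_nhdsGT_zero
  have hev1 : ∀ᶠ b in nhdsWithin 0 (Set.Ioi 0),
      k * Real.log b < B - (f a - k * Real.log a) :=
    hlog.eventually (eventually_lt_atBot _)
  have hev2 : ∀ᶠ b in nhdsWithin (0:ℝ) (Set.Ioi 0), b ∈ Set.Ioo (0:ℝ) a :=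
    Ioo_mem_nhdsGT_of_mem ⟨le_refl 0, ha⟩
  obtain ⟨b, hb1, hb2, hb3⟩ := (hev1.and (hev2.and hbb)).exists
  have := key b hb2
  linarith

/-- The traveling-wave profile problem (0.2) with d = 1/2. -/
def IsTWProfile (φ : ℝ → ℝ) : Prop :=
  ContDiffOn ℝ 1 φ (Set.Icc 0 (1/2)) ∧
  ContDiffOn ℝ 3 φ (Set.Ioo 0 (1/2)) ∧
  (∀ η ∈ Set.Ioo (0:ℝ) (1/2), 0 < φ η) ∧
  φ 0 = 0 ∧ φ (1/2) = 0 ∧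
  derivWithin φ (Set.Icc 0 (1/2)) 0 = 1 ∧
  (∀ η ∈ Set.Ioo (0:ℝ) (1/2), φ η * deriv (deriv (deriv φ)) η = 1)

/-- The first integral (2.1) of the traveling-wave equation:
`φ·φ'' = (1/2)(φ')² + η − 1/2` on `(0,1/2)`. -/
theorem traveling_wave_first_integral (φ : ℝ → ℝ) (hφ : IsTWProfile φ) :
    ContDiffOn ℝ 2 φ (Set.Ioo 0 (1/2)) ∧
    ∀ η ∈ Set.Ioo (0:ℝ) (1/2),
      φ η * deriv (deriv φ) η = (1/2) * (deriv φ η)^2 + η - 1/2 := by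
  obtain ⟨h1, h3, hpos, h00, -, hd0, hode⟩ := hφ
  have hIopen : IsOpen (Set.Ioo (0:ℝ) (1/2)) := isOpen_Ioo
  refine ⟨h3.of_le (by norm_num), ?_⟩
  -- regularity of derivatives on the open interval
  have hd1 : ContDiffOn ℝ 2 (deriv φ) (Set.Ioo 0 (1/2)) :=
    h3.deriv_of_isOpen hIopen (by norm_num)
  have hd2 : ContDiffOn ℝ 1 (deriv (deriv φ)) (Set.Ioo 0 (1/2)) :=
    hd1.deriv_of_isOpen hIopen (by norm_num)
  have hφdiff : ∀ x ∈ Set.Ioo (0:ℝ) (1/2), HasDerivAt φ (deriv φ x) x := fun x hx =>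
    ((h3.contDiffAt (hIopen.mem_nhds hx)).differentiableAt (by norm_num)).hasDerivAt
  have hφ'diff : ∀ x ∈ Set.Ioo (0:ℝ) (1/2),
      HasDerivAt (deriv φ) (deriv (deriv φ) x) x := fun x hx =>
    ((hd1.contDiffAt (hIopen.mem_nhds hx)).differentiableAt (by norm_num)).hasDerivAt
  have hφ''diff : ∀ x ∈ Set.Ioo (0:ℝ) (1/2),
      HasDerivAt (deriv (deriv φ)) (deriv (deriv (deriv φ)) x) x := fun x hx =>
    ((hd2.contDiffAt (hIopen.mem_nhds hx)).differentiableAt (by norm_num)).hasDerivAt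
  -- the first-integral function g has derivative 0
  set g : ℝ → ℝ := fun t => φ t * deriv (deriv φ) t - 1/2 * (deriv φ t)^2 - t with hgdef
  have hg : ∀ x ∈ Set.Ioo (0:ℝ) (1/2), HasDerivAt g 0 x := by
    intro x hx
    have H := (((hφdiff x hx).mul (hφ''diff x hx)).sub
      (((hφ'diff x hx).pow 2).const_mul (1/2 : ℝ))).sub (hasDerivAt_id x)
    refine H.congr_deriv ?_
    have h := hode x hx
    ring_nf
    linarith
  -- g is constant on (0, 1/2)
  have hconst : ∀ x ∈ Set.Ioo (0:ℝ) (1/2), g x = g (1/4) := by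
    intro x hx
    refine (convex_Ioo (0:ℝ) (1/2)).is_const_of_fderivWithin_eq_zero
      (fun z hz => (hg z hz).differentiableAt.differentiableWithinAt)
      (fun z hz => ?_) hx (by norm_num)
    rw [fderivWithin_of_isOpen hIopen hz, (hg z hz).hasFDerivAt.fderiv]
    ext t; simp
  -- it remains to show g (1/4) = -(1/2)
  suffices hC : g (1/4) = -(1/2) by
    intro η hη
    have := hconst η hη
    rw [hC] at this
    simp only [hgdef] at this
    linarith
  by_contra hne
  obtain ⟨K, hKdef⟩ : ∃ K : ℝ, K = g (1/4) + 1/2 := ⟨_, rfl⟩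
  have hK : K ≠ 0 := by rw [hKdef]; intro h; exact hne (by linarith)
  have hconst' : ∀ x ∈ Set.Ioo (0:ℝ) (1/2), g x = K - 1/2 := by
    intro x hx; rw [hKdef]; have := hconst x hx; linarith
  -- deriv φ tends to 1 at 0⁺
  have hψcont : ContinuousOn (derivWithin φ (Set.Icc 0 (1/2))) (Set.Icc 0 (1/2)) :=
    h1.continuousOn_derivWithin (uniqueDiffOn_Icc (by norm_num)) (le_refl 1)
  have hmemI : ∀ᶠ t in nhdsWithin (0:ℝ) (Set.Ioi 0), t ∈ Set.Ioo (0:ℝ) (1/2) :=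
    Ioo_mem_nhdsGT_of_mem ⟨le_refl 0, by norm_num⟩
  have htend : Filter.Tendsto (deriv φ) (nhdsWithin 0 (Set.Ioi 0)) (nhds 1) := by
    have t1 : Filter.Tendsto (derivWithin φ (Set.Icc 0 (1/2)))
        (nhdsWithin 0 (Set.Icc 0 (1/2))) (nhds 1) := by
      have := (hψcont 0 (by constructor <;> norm_num))
      rwa [ContinuousWithinAt, hd0] at this
    have t2 : Filter.Tendsto (derivWithin φ (Set.Icc 0 (1/2)))
        (nhdsWithin 0 (Set.Ioi 0)) (nhds 1) := by
      refine t1.mono_left ?_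
      rw [← nhdsWithin_Ioo_eq_nhdsGT (show (0:ℝ) < 1/2 by norm_num)]
      exact nhdsWithin_mono 0 Set.Ioo_subset_Icc_self
    refine t2.congr' ?_
    filter_upwards [hmemI] with t ht
    exact derivWithin_of_mem_nhds (Filter.mem_of_superset (hIopen.mem_nhds ht)
      Set.Ioo_subset_Icc_self)
  -- bound φ t ≤ M t
  obtain ⟨M0, hM0⟩ := isCompact_Icc.exists_bound_of_continuousOn hψcont
  obtain ⟨M, hMpos, hMb⟩ : ∃ M : ℝ, 0 < M ∧
      ∀ x ∈ Set.Icc (0:ℝ) (1/2), ‖derivWithin φ (Set.Icc 0 (1/2)) x‖ ≤ M :=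
    ⟨max M0 1, lt_of_lt_of_le one_pos (le_max_right _ _),
      fun y hy => (hM0 y hy).trans (le_max_left _ _)⟩
  have hφle : ∀ x ∈ Set.Icc (0:ℝ) (1/2), φ x ≤ M * x := by
    intro x hx
    have h0mem : (0:ℝ) ∈ Set.Icc (0:ℝ) (1/2) := by constructor <;> norm_num
    have := (convex_Icc (0:ℝ) (1/2)).norm_image_sub_le_of_norm_derivWithin_le
      (h1.differentiableOn (by norm_num)) hMb h0mem hx
    rw [h00, sub_zero, sub_zero] at this
    calc φ x ≤ |φ x| := le_abs_self _
    _ ≤ M * |x| := this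
    _ = M * x := by rw [abs_of_nonneg hx.1]
  -- φ·φ'' tends to K at 0⁺
  have htendh : Filter.Tendsto (fun t => φ t * deriv (deriv φ) t)
      (nhdsWithin 0 (Set.Ioi 0)) (nhds K) := by
    have t3 : Filter.Tendsto (fun t : ℝ => 1/2 * (deriv φ t)^2 + t + (K - 1/2))
        (nhdsWithin (0:ℝ) (Set.Ioi 0)) (nhds K) := by
      have h4 : Filter.Tendsto (fun t : ℝ => 1/2 * (deriv φ t)^2 + t + (K - 1/2))
          (nhdsWithin (0:ℝ) (Set.Ioi 0)) (nhds (1/2 * (1:ℝ)^2 + 0 + (K - 1/2))) :=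
        (((htend.pow 2).const_mul (1/2:ℝ)).add
          (tendsto_id.mono_left nhdsWithin_le_nhds)).add tendsto_const_nhds
      have heq : 1/2 * (1:ℝ)^2 + 0 + (K - 1/2) = K := by ring
      rwa [heq] at h4
    refine t3.congr' ?_
    filter_upwards [hmemI] with t ht
    have := hconst' t ht
    simp only [hgdef] at this
    linarith
  -- find a where φ·φ'' is within |K|/2 of K
  have hev : ∀ᶠ t in nhdsWithin (0:ℝ) (Set.Ioi 0),
      |φ t * deriv (deriv φ) t - K| < |K| / 2 :=
    htendh.eventually (eventually_abs_sub_lt K (half_pos (abs_pos.2 hK)))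
  obtain ⟨u, hu, hsub⟩ := mem_nhdsGT_iff_exists_Ioc_subset.1 (hev.and hmemI)
  set a : ℝ := min u (1/4) with hadef
  have ha : 0 < a := lt_min hu (by norm_num)
  have haI : Set.Ioc (0:ℝ) a ⊆ Set.Ioo (0:ℝ) (1/2) := fun t ht =>
    ⟨ht.1, lt_of_le_of_lt (ht.2.trans (min_le_right _ _)) (by norm_num)⟩
  have hkey : ∀ t ∈ Set.Ioo (0:ℝ) a,
      |φ t * deriv (deriv φ) t - K| < |K| / 2 ∧ t ∈ Set.Ioo (0:ℝ) (1/2) := fun t ht =>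
    hsub ⟨ht.1, ht.2.le.trans (min_le_left _ _)⟩
  have hioc : Set.Ioc (0:ℝ) a ⊆ Set.Ioo (0:ℝ) (1/2) := haI
  rcases hK.lt_or_gt with hKneg | hKpos
  · -- K < 0 : apply blow-up lemma to -φ'
    have habsK : |K| = -K := abs_of_neg hKneg
    refine aux_log_blowup (f := fun t => -(deriv φ t))
      (g := fun t => -(deriv (deriv φ) t)) (B := -2) ha
      (div_pos (neg_pos.2 hKneg) (mul_pos two_pos hMpos)) ?_ ?_ ?_ ?_
    · exact ((hd1.continuousOn).mono hioc).neg
    · exact fun t ht => (hφ'diff t (haI ⟨ht.1, ht.2.le⟩)).neg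
    · intro t ht
      obtain ⟨habs, htI⟩ := hkey t ht
      rw [habsK] at habs
      have h2 : φ t * deriv (deriv φ) t < K / 2 := by
        rcases abs_lt.1 habs with ⟨-, h⟩; linarith
      have hφpos := hpos t htI
      have hφM := hφle t (Set.Ioo_subset_Icc_self htI)
      have hd2neg : deriv (deriv φ) t < 0 := by
        by_contra hcon
        push_neg at hcon
        nlinarith [mul_nonneg hφpos.le hcon]
      show (-K)/(2*M)/t ≤ -deriv (deriv φ) t
      rw [div_div, div_le_iff₀ (mul_pos (mul_pos two_pos hMpos) ht.1)]
      nlinarith [mul_le_mul_of_nonneg_left hφM (by linarith : (0:ℝ) ≤ -(deriv (deriv φ) t))]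
    · filter_upwards [htend.eventually (eventually_le_nhds (by norm_num : (1:ℝ) < 2))] with t ht
      linarith
  · -- K > 0
    have habsK : |K| = K := abs_of_pos hKpos
    refine aux_log_blowup (f := deriv φ) (g := deriv (deriv φ)) (B := 1/2) ha
      (div_pos hKpos (mul_pos two_pos hMpos)) ?_ ?_ ?_ ?_
    · exact (hd1.continuousOn).mono hioc
    · exact fun t ht => hφ'diff t (haI ⟨ht.1, ht.2.le⟩)
    · intro t ht
      obtain ⟨habs, htI⟩ := hkey t ht
      rw [habsK] at habs
      have h2 : K / 2 < φ t * deriv (deriv φ) t := by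
        rcases abs_lt.1 habs with ⟨h, -⟩; linarith
      have hφpos := hpos t htI
      have hφM := hφle t (Set.Ioo_subset_Icc_self htI)
      have hd2pos : 0 < deriv (deriv φ) t := by
        by_contra hcon
        push_neg at hcon
        nlinarith [mul_nonpos_of_nonneg_of_nonpos hφpos.le hcon]
      rw [div_div, div_le_iff₀ (mul_pos (mul_pos two_pos hMpos) ht.1)]
      nlinarith [mul_le_mul_of_nonneg_left hφM hd2pos.le]
    · exact htend.eventually (eventually_ge_nhds (by norm_num : (1:ℝ)/2 < 1))
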